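/- Let $(X,d,\mu,\mathcal{E}_p,\mathcal{F}_p,\Gamma_p)$ be a regular local $p$-Dirichlet space satisfying the capacity upper bound $\mathrm{Cap}_p(\Psi)$ and the Poincaré inequality $\mathrm{PI}_p(\Psi)$ (with constants $C_{\mathrm{cap}}$, $C_{\mathrm{PI}}$, $\Lambda$), and with $\mu$ doubling. Then the classical cutoff Sobolev inequality $\mathrm{CS}_{\mathrm{classical}}(\Psi)$ holds if and only if the cutoff Sobolev inequality $\mathrm{CS}_p$ holds. -/

import Mathlib

open MeasureTheory Metric Set ENNReal Filter

noncomputable section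

/-- A regular local `p`-Dirichlet structure on a metric measure space (Definition 2.1 of the
paper).  Members of `F` are (representatives of) functions in the domain of the energy; `Γ f`
is the energy measure of `f`, and the total energy is `E_p(f) = Γ f univ`. -/
structure PDirichlet (X : Type) [MetricSpace X] [MeasurableSpace X] [BorelSpace X]
    (μ : Measure X) (p : ℝ) where
  F : Set (X → ℝ)
  Γ : (X → ℝ) → Measure X
  mem_Lp : ∀ f ∈ F, MemLp f (ENNReal.ofReal p) μ
  congr_ae : ∀ f ∈ F, ∀ g : X → ℝ, f =ᵐ[μ] g → Measurable g → g ∈ F ∧ Γ g = Γ f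
  energy_finite : ∀ f ∈ F, Γ f Set.univ ≠ ∞
  add_mem : ∀ f ∈ F, ∀ g ∈ F, f + g ∈ F
  smul_mem : ∀ (c : ℝ), ∀ f ∈ F, c • f ∈ F
  homogeneity : ∀ f ∈ F, ∀ c : ℝ, Γ (c • f) = ENNReal.ofReal (|c| ^ p) • Γ f
  triangle : ∀ f ∈ F, ∀ g ∈ F, ∀ A : Set X,
    (Γ (f + g) A) ^ (1 / p) ≤ (Γ f A) ^ (1 / p) + (Γ g A) ^ (1 / p)
  lipschitz_mem : ∀ f ∈ F, ∀ (L : NNReal) (g : ℝ → ℝ), LipschitzWith L g → g 0 = 0 →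
    g ∘ f ∈ F
  lipschitz_contract : ∀ f ∈ F, ∀ (L : NNReal) (g : ℝ → ℝ), LipschitzWith L g → g 0 = 0 →
    ∀ A : Set X, Γ (g ∘ f) A ≤ (L : ℝ≥0∞) ^ p * Γ f A
  locality : ∀ f ∈ F, ∀ A : Set X, IsOpen A → ∀ c : ℝ,
    (∀ᵐ x ∂(μ.restrict A), f x = c) → Γ f A = 0
  lsc : ∀ (f : X → ℝ) (fs : ℕ → X → ℝ), (∀ i, fs i ∈ F) → Measurable f →
    Tendsto (fun i => eLpNorm (fs i - f) (ENNReal.ofReal p) μ) atTop (nhds 0) →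
    (∃ M : ℝ≥0∞, M ≠ ∞ ∧ ∀ i, Γ (fs i) Set.univ ≤ M) →
    f ∈ F ∧ ∀ A : Set X, Γ f A ≤ liminf (fun i => Γ (fs i) A) atTop
  complete : ∀ fs : ℕ → X → ℝ, (∀ i, fs i ∈ F) →
    (∀ ε : ℝ≥0∞, 0 < ε → ∃ K, ∀ m ≥ K, ∀ n ≥ K,
      (eLpNorm (fs m - fs n) (ENNReal.ofReal p) μ) ^ p + Γ (fs m - fs n) Set.univ < ε) →
    ∃ f ∈ F, Tendsto (fun i =>
      (eLpNorm (fs i - f) (ENNReal.ofReal p) μ) ^ p + Γ (fs i - f) Set.univ) atTop (nhds 0)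
  regular_dense_F : ∀ f ∈ F, ∀ ε : ℝ, 0 < ε → ∃ g ∈ F, Continuous g ∧ HasCompactSupport g ∧
    (eLpNorm (f - g) (ENNReal.ofReal p) μ) ^ p + Γ (f - g) Set.univ < ENNReal.ofReal ε
  regular_dense_C : ∀ f : X → ℝ, Continuous f → HasCompactSupport f → ∀ ε : ℝ, 0 < ε →
    ∃ g ∈ F, Continuous g ∧ HasCompactSupport g ∧ ∀ x, |f x - g x| ≤ ε

namespace PDirichlet

variable {X : Type} [MetricSpace X] [MeasurableSpace X] [BorelSpace X]
  {μ : Measure X} {p : ℝ}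

/-- The `p`-th power of the `F_p`-norm, valued in `ℝ≥0∞`. -/
def fnormP (D : PDirichlet X μ p) (f : X → ℝ) : ℝ≥0∞ :=
  (∫⁻ x, ENNReal.ofReal (|f x| ^ p) ∂μ) + D.Γ f Set.univ

/-- Capacity of an open set. -/
def capOpen (D : PDirichlet X μ p) (O : Set X) : ℝ≥0∞ :=
  ⨅ (f : X → ℝ) (_ : f ∈ D.F) (_ : ∀ᵐ x ∂μ, x ∈ O → 1 ≤ f x), D.fnormP f

/-- Capacity of an arbitrary set, by outer regularity. -/
def cap (D : PDirichlet X μ p) (A : Set X) : ℝ≥0∞ :=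
  ⨅ (O : Set X) (_ : IsOpen O) (_ : A ⊆ O), D.capOpen O

/-- A function is quasicontinuous if it is continuous off open sets of arbitrarily small
capacity. -/
def QuasiCont (D : PDirichlet X μ p) (f : X → ℝ) : Prop :=
  ∀ ε : ℝ, 0 < ε → ∃ O : Set X, IsOpen O ∧ D.cap O < ENNReal.ofReal ε ∧ ContinuousOn f Oᶜ

end PDirichlet

/-- The `μ`-average of `f` over `A`. -/
def avgSet {X : Type} [MeasurableSpace X] (μ : Measure X) (A : Set X) (f : X → ℝ) : ℝ :=
  (μ A).toReal⁻¹ * ∫ y in A, f y ∂μ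

/-- A regular scale function (with constants `C_Ψ`, `β₊ ≥ β₋ > 0`). -/
def IsRegularScale {X : Type} [MetricSpace X] (Ψ : X → ℝ → ℝ) (C_Ψ βp βm : ℝ) : Prop :=
  (∀ x, Ψ x 0 = 0) ∧ (∀ x r, 0 < r → 0 < Ψ x r) ∧
  ∀ (x y : X) (s r : ℝ), 0 < s → s ≤ r →
    ENNReal.ofReal r ≤ 2 * EMetric.diam (Set.univ : Set X) →
    C_Ψ⁻¹ * ((max s (dist x y)) / r) ^ βp * (s / max r (dist x y)) ^ βm ≤ Ψ x r / Ψ y s ∧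
    Ψ x r / Ψ y s ≤ C_Ψ * (r / max r (dist x y)) ^ βm * ((max r (dist x y)) / s) ^ βp

/-- The capacity upper bound `Cap_p(Ψ)`. -/
def CapUB {X : Type} [MetricSpace X] [MeasurableSpace X] [BorelSpace X]
    {μ : Measure X} {p : ℝ} (D : PDirichlet X μ p) (Ψ : X → ℝ → ℝ) (Ccap : ℝ) : Prop :=
  ∀ (x : X) (r : ℝ), 0 < r → ∃ ψ ∈ D.F, Continuous ψ ∧
    (∀ y ∈ ball x r, ψ y = 1) ∧ (∀ y ∉ ball x (2 * r), ψ y = 0) ∧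
    D.Γ ψ Set.univ ≤ ENNReal.ofReal Ccap * μ (ball x r) / ENNReal.ofReal (Ψ x r)

/-- The Poincaré inequality `PI_p(Ψ)` (in the equivalent non-averaged form
`∫_B |f - f_B|^p dμ ≤ C_PI Ψ(B) Γ⟨f⟩(ΛB)`). -/
def PoincareIneq {X : Type} [MetricSpace X] [MeasurableSpace X] [BorelSpace X]
    {μ : Measure X} {p : ℝ} (D : PDirichlet X μ p) (Ψ : X → ℝ → ℝ) (CPI Λ : ℝ) : Prop :=
  ∀ (x : X) (r : ℝ), 0 < r → ∀ f ∈ D.F,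
    ∫⁻ y in ball x r, ENNReal.ofReal (|f y - avgSet μ (ball x r) f| ^ p) ∂μ ≤
      ENNReal.ofReal (CPI * Ψ x r) * D.Γ f (ball x (Λ * r))

/-- The measure `μ` is doubling (with finite positive measure on balls). -/
def DoublingMeasure' {X : Type} [MetricSpace X] [MeasurableSpace X] (μ : Measure X)
    (C_D : ℝ) : Prop :=
  (∀ (x : X) (r : ℝ), 0 < r → μ (ball x (2 * r)) ≤ ENNReal.ofReal C_D * μ (ball x r)) ∧
  (∀ (x : X) (r : ℝ), 0 < r → 0 < μ (ball x r) ∧ μ (ball x r) < ∞)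

end

open MeasureTheory Metric Set ENNReal Filter PDirichlet

/-- The cutoff Sobolev inequality `CS_p` (the two-weighted Poincaré form). -/
def CSp {X : Type} [MetricSpace X] [MeasurableSpace X] [BorelSpace X]
    {μ : Measure X} {p : ℝ} (D : PDirichlet X μ p) (C Λ : ℝ) : Prop :=
  ∀ (x : X) (r : ℝ), 0 < r → ∃ φ ∈ D.F,
    (∀ᵐ y ∂μ, y ∈ ball x r → φ y = 1) ∧ (∀ᵐ y ∂μ, y ∉ ball x (2 * r) → φ y = 0) ∧
    ∀ f ∈ D.F, ∀ g : X → ℝ, g =ᵐ[μ] f → D.QuasiCont g →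
      ∫⁻ y in ball x (2 * r),
          ENNReal.ofReal (|g y - avgSet μ (ball x r) f| ^ p) ∂(D.Γ φ) ≤
        ENNReal.ofReal C * D.Γ f (ball x (Λ * r))

/-- The classical cutoff Sobolev inequality `CS_classical(Ψ)`. -/
def CSclassical {X : Type} [MetricSpace X] [MeasurableSpace X] [BorelSpace X]
    {μ : Measure X} {p : ℝ} (D : PDirichlet X μ p) (Ψ : X → ℝ → ℝ) (C Λ : ℝ) : Prop :=
  ∀ (x : X) (r : ℝ), 0 < r → ∃ φ ∈ D.F,
    (∀ᵐ y ∂μ, y ∈ ball x r → φ y = 1) ∧ (∀ᵐ y ∂μ, y ∉ ball x (2 * r) → φ y = 0) ∧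
    ∀ f ∈ D.F, ∀ g : X → ℝ, g =ᵐ[μ] f → D.QuasiCont g →
      ∫⁻ y in ball x (2 * r), ENNReal.ofReal (|g y| ^ p) ∂(D.Γ φ) ≤
        ENNReal.ofReal C * D.Γ f (ball x (Λ * r)) +
          (ENNReal.ofReal C / ENNReal.ofReal (Ψ x r)) *
            ∫⁻ y in ball x (2 * r), ENNReal.ofReal (|f y| ^ p) ∂μ


section AuxLemmas

variable {X : Type} [MetricSpace X] [MeasurableSpace X] [BorelSpace X]
  {μ : Measure X} {p : ℝ}

lemma rpow_two_mul {a b : ℝ≥0∞} (ha : a ≠ ⊤) (hb : b ≠ ⊤) {p : ℝ} (hp : 1 ≤ p) :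
    (a + b) ^ p ≤ 2 ^ (p - 1) * (a ^ p + b ^ p) := by
  have htwo : (2⁻¹ : ℝ≥0∞) + 2⁻¹ = 1 := by
    rw [← two_mul, ENNReal.mul_inv_cancel (by norm_num) (by norm_num)]
  have h := ENNReal.rpow_arith_mean_le_arith_mean2_rpow 2⁻¹ 2⁻¹ a b htwo hp
  have hfin : (2⁻¹ * a + 2⁻¹ * b) ≠ ⊤ :=
    ENNReal.add_ne_top.2 ⟨ENNReal.mul_ne_top (by norm_num) ha, ENNReal.mul_ne_top (by norm_num) hb⟩
  have key : a + b = 2 * (2⁻¹ * a + 2⁻¹ * b) := by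
    rw [mul_add, ← mul_assoc, ← mul_assoc, ENNReal.mul_inv_cancel (by norm_num) (by norm_num),
      one_mul, one_mul]
  calc (a + b) ^ p = 2 ^ p * (2⁻¹ * a + 2⁻¹ * b) ^ p := by
        rw [key, ENNReal.mul_rpow_of_ne_top (by norm_num) hfin]
    _ ≤ 2 ^ p * (2⁻¹ * a ^ p + 2⁻¹ * b ^ p) := by gcongr
    _ = 2 ^ (p - 1) * (a ^ p + b ^ p) := by
        rw [ENNReal.rpow_sub _ _ (by norm_num) (by norm_num), ENNReal.rpow_one,
          ENNReal.div_eq_inv_mul, mul_add, mul_add]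
        ring

lemma ofReal_abs_add_rpow {p : ℝ} (hp : 1 ≤ p) (u v : ℝ) :
    ENNReal.ofReal (|u + v| ^ p) ≤
      2 ^ (p - 1) * (ENNReal.ofReal (|u| ^ p) + ENNReal.ofReal (|v| ^ p)) := by
  have h2 : ENNReal.ofReal (|u + v| ^ p) ≤ ENNReal.ofReal ((|u| + |v|) ^ p) :=
    ENNReal.ofReal_le_ofReal (Real.rpow_le_rpow (abs_nonneg _) (abs_add_le u v) (by linarith))
  refine h2.trans ?_
  have h3 : ENNReal.ofReal ((|u| + |v|) ^ p) = (ENNReal.ofReal (|u| + |v|)) ^ p :=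
    (ENNReal.ofReal_rpow_of_nonneg (by positivity) (by linarith)).symm
  rw [h3, ENNReal.ofReal_add (abs_nonneg _) (abs_nonneg _)]
  refine (rpow_two_mul ENNReal.ofReal_ne_top ENNReal.ofReal_ne_top hp).trans ?_
  rw [ENNReal.ofReal_rpow_of_nonneg (abs_nonneg _) (by linarith),
    ENNReal.ofReal_rpow_of_nonneg (abs_nonneg _) (by linarith)]

lemma ofReal_mul_le_abs (c t : ℝ) (ht : 0 ≤ t) :
    ENNReal.ofReal (c * t) ≤ ENNReal.ofReal |c| * ENNReal.ofReal t := by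
  calc ENNReal.ofReal (c * t) ≤ ENNReal.ofReal (|c| * t) :=
        ENNReal.ofReal_le_ofReal (mul_le_mul_of_nonneg_right (le_abs_self _) ht)
    _ = ENNReal.ofReal |c| * ENNReal.ofReal t := ENNReal.ofReal_mul (abs_nonneg _)

lemma aemeas_ofReal_abs_rpow {ν : Measure X} {f : X → ℝ} (hf : AEMeasurable f ν)
    (hp : 0 ≤ p) (a : ℝ) :
    AEMeasurable (fun y => ENNReal.ofReal (|f y - a| ^ p)) ν :=
  (ENNReal.measurable_ofReal.comp
    ((continuous_abs.rpow_const fun _ => Or.inr hp).measurable)).comp_aemeasurable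
    (hf.sub aemeasurable_const)

lemma energy_add_le_of_const (D : PDirichlet X μ p) (hp : 1 < p)
    {f g : X → ℝ} (hf : f ∈ D.F) (hg : g ∈ D.F) {A : Set X} (hA : IsOpen A) {c : ℝ}
    (hconst : ∀ᵐ x ∂(μ.restrict A), g x = c) :
    D.Γ (f + g) A ≤ D.Γ f A := by
  have hp0 : p ≠ 0 := ne_of_gt (by linarith)
  have h0 : D.Γ g A = 0 := D.locality g hg A hA c hconst
  have ht := D.triangle f hf g hg A
  rw [h0, ENNReal.zero_rpow_of_pos (by rw [one_div]; exact inv_pos.2 (by linarith)),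
    add_zero] at ht
  have h2 := ENNReal.rpow_le_rpow ht (by linarith : (0:ℝ) ≤ p)
  rwa [← ENNReal.rpow_mul, ← ENNReal.rpow_mul, one_div, inv_mul_cancel₀ hp0,
    ENNReal.rpow_one, ENNReal.rpow_one] at h2

lemma zero_mem_F (D : PDirichlet X μ p) (hp : 1 < p) {f0 : X → ℝ} (hf0 : f0 ∈ D.F) :
    (0 : X → ℝ) ∈ D.F ∧ D.fnormP 0 = 0 := by
  have hp0 : p ≠ 0 := ne_of_gt (by linarith)
  have hz : (0 : X → ℝ) = (0 : ℝ) • f0 := by rw [zero_smul]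
  have hmem : (0 : X → ℝ) ∈ D.F := hz ▸ D.smul_mem 0 f0 hf0
  have hΓ : D.Γ (0 : X → ℝ) = (0 : ℝ≥0∞) • D.Γ f0 := by
    rw [hz, D.homogeneity f0 hf0 0]
    congr 1
    simp [Real.zero_rpow hp0]
  refine ⟨hmem, ?_⟩
  unfold PDirichlet.fnormP
  rw [hΓ]
  simp [Real.zero_rpow hp0]

lemma quasiCont_of_continuous (D : PDirichlet X μ p) (hp : 1 < p)
    {f0 : X → ℝ} (hf0 : f0 ∈ D.F) {g : X → ℝ} (hg : Continuous g) : D.QuasiCont g := by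
  obtain ⟨h0, hnorm⟩ := zero_mem_F D hp hf0
  intro ε hε
  refine ⟨∅, isOpen_empty, ?_, hg.continuousOn⟩
  have h1 : D.cap ∅ ≤ D.capOpen ∅ :=
    iInf_le_of_le ∅ (iInf_le_of_le isOpen_empty (iInf_le_of_le (Set.empty_subset _) le_rfl))
  have h2 : D.capOpen ∅ ≤ D.fnormP 0 := by
    refine iInf_le_of_le 0 (iInf_le_of_le h0 (iInf_le_of_le ?_ le_rfl))
    exact Filter.Eventually.of_forall (fun x hx => absurd hx (Set.notMem_empty x))
  calc D.cap ∅ ≤ 0 := h1.trans (h2.trans_eq hnorm)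
    _ < ENNReal.ofReal ε := ENNReal.ofReal_pos.2 hε

lemma cutoff_trunc (D : PDirichlet X μ p) {Ψ : X → ℝ → ℝ} {Ccap : ℝ}
    (hcap : CapUB D Ψ Ccap) (x : X) {r : ℝ} (hr : 0 < r) :
    ∃ ψ ∈ D.F, Continuous ψ ∧ (∀ y, 0 ≤ ψ y) ∧ (∀ y, ψ y ≤ 1) ∧
      (∀ y ∈ ball x r, ψ y = 1) ∧ (∀ y ∉ ball x (2 * r), ψ y = 0) ∧
      D.Γ ψ Set.univ ≤ ENNReal.ofReal Ccap * μ (ball x r) / ENNReal.ofReal (Ψ x r) := by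
  obtain ⟨ψ₀, hψ₀F, hψ₀c, hψ₀1, hψ₀0, hψ₀Γ⟩ := hcap x r hr
  set cl : ℝ → ℝ := fun t => max 0 (min t 1) with hcl
  have hlip : LipschitzWith 1 cl :=
    LipschitzWith.const_max (LipschitzWith.min_const LipschitzWith.id 1) 0
  have hcl0 : cl 0 = 0 := by simp [hcl]
  refine ⟨cl ∘ ψ₀, D.lipschitz_mem ψ₀ hψ₀F 1 cl hlip hcl0, hlip.continuous.comp hψ₀c,
    fun y => le_max_left _ _, fun y => max_le (by norm_num) (min_le_right _ _),
    fun y hy => by simp [Function.comp, hcl, hψ₀1 y hy],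
    fun y hy => by simp [Function.comp, hcl, hψ₀0 y hy], ?_⟩
  have h := D.lipschitz_contract ψ₀ hψ₀F 1 cl hlip hcl0 Set.univ
  rw [ENNReal.coe_one, ENNReal.one_rpow, one_mul] at h
  exact h.trans hψ₀Γ

lemma scale_two {Ψ : X → ℝ → ℝ} {C_Ψ βp βm : ℝ} (hΨ : IsRegularScale Ψ C_Ψ βp βm)
    (x : X) {s : ℝ} (hs : 0 < s) :
    Ψ x (2 * s) ≤ |C_Ψ| * 2 ^ βp * Ψ x s ∨ ball x s = (Set.univ : Set X) := by
  by_cases hd : ENNReal.ofReal (2 * s) ≤ 2 * EMetric.diam (Set.univ : Set X)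
  · left
    have h := (hΨ.2.2 x x s (2 * s) hs (by linarith) hd).2
    rw [dist_self, max_eq_left (by linarith : (0:ℝ) ≤ 2 * s)] at h
    rw [div_self (by linarith : (2:ℝ) * s ≠ 0), Real.one_rpow, mul_one,
      (by field_simp : (2:ℝ) * s / s = 2)] at h
    have hΨs : 0 < Ψ x s := hΨ.2.1 x s hs
    have h2 := (div_le_iff₀ hΨs).1 h
    have habs : C_Ψ ≤ |C_Ψ| := le_abs_self _
    nlinarith [mul_le_mul_of_nonneg_right (mul_le_mul_of_nonneg_right habs
      (Real.rpow_pos_of_pos (by norm_num : (0:ℝ) < 2) βp).le) hΨs.le]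
  · right
    push_neg at hd
    rw [ENNReal.ofReal_mul (by norm_num : (0:ℝ) ≤ 2), (by norm_num :
      ENNReal.ofReal 2 = 2)] at hd
    have hdiam : EMetric.diam (Set.univ : Set X) < ENNReal.ofReal s :=
      (ENNReal.mul_lt_mul_iff_right (by norm_num) (by norm_num)).1 hd
    refine Set.eq_univ_of_forall fun y => ?_
    rw [mem_ball]
    have h1 : edist y x ≤ EMetric.diam (Set.univ : Set X) :=
      EMetric.edist_le_diam_of_mem (Set.mem_univ _) (Set.mem_univ _)
    exact edist_lt_ofReal.1 (h1.trans_lt hdiam)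

lemma PI_double {D : PDirichlet X μ p} {Ψ : X → ℝ → ℝ} {C_Ψ βp βm C_D CPI Λ₀ : ℝ}
    (hp : 1 < p) (hdoub : DoublingMeasure' μ C_D)
    (hΨ : IsRegularScale Ψ C_Ψ βp βm) (hPI : PoincareIneq D Ψ CPI Λ₀) (hΛ₀ : 8 ≤ Λ₀) :
    ∃ K : ℝ≥0∞, K ≠ ⊤ ∧ ∀ (x : X) (r : ℝ), 0 < r → ∀ f ∈ D.F,
      ∫⁻ y in ball x (2 * r), ENNReal.ofReal (|f y - avgSet μ (ball x r) f| ^ p) ∂μ ≤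
        K * (ENNReal.ofReal (Ψ x r) * D.Γ f (ball x (2 * Λ₀ * r))) := by
  set e2 : ℝ≥0∞ := 2 ^ (p - 1) with he2
  have he2T : e2 ≠ ⊤ := ENNReal.rpow_ne_top_of_nonneg (by linarith) (by norm_num)
  set c2 : ℝ≥0∞ := ENNReal.ofReal (|C_Ψ| * 2 ^ βp) with hc2
  set cpi : ℝ≥0∞ := ENNReal.ofReal |CPI| with hcpi
  refine ⟨e2 * ((1 + c2) * cpi + ENNReal.ofReal C_D * (e2 * ((1 + c2) * cpi + cpi))), ?_, ?_⟩
  · refine ENNReal.mul_ne_top he2T (ENNReal.add_ne_top.2 ⟨?_, ?_⟩)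
    · exact ENNReal.mul_ne_top (ENNReal.add_ne_top.2 ⟨ENNReal.one_ne_top,
        ENNReal.ofReal_ne_top⟩) ENNReal.ofReal_ne_top
    · exact ENNReal.mul_ne_top ENNReal.ofReal_ne_top (ENNReal.mul_ne_top he2T
        (ENNReal.add_ne_top.2 ⟨ENNReal.mul_ne_top (ENNReal.add_ne_top.2
          ⟨ENNReal.one_ne_top, ENNReal.ofReal_ne_top⟩) ENNReal.ofReal_ne_top,
          ENNReal.ofReal_ne_top⟩))
  intro x r hr f hf
  have hΛ₀r : Λ₀ * r ≤ 2 * Λ₀ * r := by nlinarith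
  have hΨpos : 0 < Ψ x r := hΨ.2.1 x r hr
  have hfm : AEMeasurable f μ := (D.mem_Lp f hf).1.aemeasurable
  set a := avgSet μ (ball x r) f with ha
  set b := avgSet μ (ball x (2 * r)) f with hb
  set P : ℝ≥0∞ := ENNReal.ofReal (Ψ x r) * D.Γ f (ball x (2 * Λ₀ * r)) with hP
  have hP1 : ∫⁻ y in ball x r, ENNReal.ofReal (|f y - a| ^ p) ∂μ ≤ cpi * P := by
    refine (hPI x r hr f hf).trans ?_
    calc ENNReal.ofReal (CPI * Ψ x r) * D.Γ f (ball x (Λ₀ * r))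
        ≤ (cpi * ENNReal.ofReal (Ψ x r)) * D.Γ f (ball x (2 * Λ₀ * r)) := by
          refine mul_le_mul' (ofReal_mul_le_abs _ _ hΨpos.le) ?_
          exact measure_mono (ball_subset_ball hΛ₀r)
      _ = cpi * P := by rw [hP, mul_assoc]
  have hP2 : ∫⁻ y in ball x (2 * r), ENNReal.ofReal (|f y - b| ^ p) ∂μ
      ≤ (1 + c2) * cpi * P := by
    rcases scale_two hΨ x hr with hsc | huniv
    · have h := hPI x (2 * r) (by linarith) f hf
      rw [(by ring : Λ₀ * (2 * r) = 2 * Λ₀ * r)] at h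
      refine h.trans ?_
      have h1 : ENNReal.ofReal (CPI * Ψ x (2 * r)) ≤ cpi * (c2 * ENNReal.ofReal (Ψ x r)) := by
        refine (ofReal_mul_le_abs _ _ (hΨ.2.1 x (2 * r) (by linarith)).le).trans ?_
        refine mul_le_mul_right ?_ _
        refine (ENNReal.ofReal_le_ofReal hsc).trans_eq ?_
        exact ENNReal.ofReal_mul (by positivity)
      calc ENNReal.ofReal (CPI * Ψ x (2 * r)) * D.Γ f (ball x (2 * Λ₀ * r))
          ≤ (cpi * (c2 * ENNReal.ofReal (Ψ x r))) * D.Γ f (ball x (2 * Λ₀ * r)) :=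
            mul_le_mul_left h1 _
        _ = c2 * cpi * P := by rw [hP]; ring
        _ ≤ (1 + c2) * cpi * P := by
            gcongr
            exact le_add_self
    · have h2 : ball x (2 * r) = ball x r := by
        rw [huniv]
        exact Set.eq_univ_of_univ_subset (huniv ▸ ball_subset_ball (by linarith))
      have hba : b = a := by rw [hb, ha, h2]
      rw [h2, hba]
      refine hP1.trans ?_
      calc cpi * P = 1 * (cpi * P) := (one_mul _).symm
        _ ≤ ((1 + c2) * cpi) * P := by rw [mul_assoc]; gcongr; exact le_self_add
  have hconst : ENNReal.ofReal (|b - a| ^ p) * μ (ball x r) ≤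
      e2 * ((1 + c2) * cpi * P + cpi * P) := by
    have hpt : ∀ y : X, ENNReal.ofReal (|b - a| ^ p) ≤
        e2 * (ENNReal.ofReal (|f y - b| ^ p) + ENNReal.ofReal (|f y - a| ^ p)) := by
      intro y
      have h := ofReal_abs_add_rpow (le_of_lt hp) (b - f y) (f y - a)
      rw [(by ring : b - f y + (f y - a) = b - a), abs_sub_comm b (f y)] at h
      exact h
    calc ENNReal.ofReal (|b - a| ^ p) * μ (ball x r)
        = ∫⁻ _ in ball x r, ENNReal.ofReal (|b - a| ^ p) ∂μ := (setLIntegral_const _ _).symm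
      _ ≤ ∫⁻ y in ball x r, e2 * (ENNReal.ofReal (|f y - b| ^ p)
            + ENNReal.ofReal (|f y - a| ^ p)) ∂μ := lintegral_mono fun y => hpt y
      _ = e2 * (∫⁻ y in ball x r, ENNReal.ofReal (|f y - b| ^ p) ∂μ
            + ∫⁻ y in ball x r, ENNReal.ofReal (|f y - a| ^ p) ∂μ) := by
          rw [lintegral_const_mul' _ _ he2T,
            lintegral_add_left' ((aemeas_ofReal_abs_rpow hfm (by linarith) b).restrict)]
      _ ≤ e2 * ((1 + c2) * cpi * P + cpi * P) := by
          refine mul_le_mul_right (add_le_add ?_ hP1) _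
          exact (lintegral_mono_set (ball_subset_ball (by linarith))).trans hP2
  have hdoubB : μ (ball x (2 * r)) ≤ ENNReal.ofReal C_D * μ (ball x r) := hdoub.1 x r hr
  calc ∫⁻ y in ball x (2 * r), ENNReal.ofReal (|f y - a| ^ p) ∂μ
      ≤ ∫⁻ y in ball x (2 * r), e2 * (ENNReal.ofReal (|f y - b| ^ p)
          + ENNReal.ofReal (|b - a| ^ p)) ∂μ := by
        refine lintegral_mono fun y => ?_
        have h := ofReal_abs_add_rpow (le_of_lt hp) (f y - b) (b - a)
        rwa [(by ring : f y - b + (b - a) = f y - a)] at h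
    _ = e2 * (∫⁻ y in ball x (2 * r), ENNReal.ofReal (|f y - b| ^ p) ∂μ
          + ENNReal.ofReal (|b - a| ^ p) * μ (ball x (2 * r))) := by
        rw [lintegral_const_mul' _ _ he2T, lintegral_add_right' _ aemeasurable_const,
          setLIntegral_const]
    _ ≤ e2 * ((1 + c2) * cpi * P
          + ENNReal.ofReal C_D * (ENNReal.ofReal (|b - a| ^ p) * μ (ball x r))) := by
        refine mul_le_mul_right (add_le_add hP2 ?_) _
        calc ENNReal.ofReal (|b - a| ^ p) * μ (ball x (2 * r))
            ≤ ENNReal.ofReal (|b - a| ^ p) * (ENNReal.ofReal C_D * μ (ball x r)) :=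
              mul_le_mul_right hdoubB _
          _ = ENNReal.ofReal C_D * (ENNReal.ofReal (|b - a| ^ p) * μ (ball x r)) := by ring
    _ ≤ e2 * ((1 + c2) * cpi * P + ENNReal.ofReal C_D * (e2 * ((1 + c2) * cpi * P
          + cpi * P))) := by
        exact mul_le_mul_right (add_le_add_right (mul_le_mul_right hconst _) _) _
    _ = e2 * ((1 + c2) * cpi + ENNReal.ofReal C_D * (e2 * ((1 + c2) * cpi + cpi))) * P := by
        ring

end AuxLemmas

/-- under volume doubling, `Cap_p(Ψ)` and `PI_p(Ψ)`, the classical cutoff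
Sobolev inequality is equivalent to `CS_p`. -/
theorem stmt12 {X : Type} [MetricSpace X] [MeasurableSpace X] [BorelSpace X]
    (μ : Measure X) (p : ℝ) (hp : 1 < p) (D : PDirichlet X μ p)
    (C_D : ℝ) (hdoub : DoublingMeasure' μ C_D)
    (Ψ : X → ℝ → ℝ) (C_Ψ βp βm : ℝ) (hΨ : IsRegularScale Ψ C_Ψ βp βm)
    (hβp : 0 < βp) (hβm : 0 < βm)
    (Ccap : ℝ) (hcap : CapUB D Ψ Ccap)
    (CPI Λ₀ : ℝ) (hΛ₀ : 8 ≤ Λ₀) (hPI : PoincareIneq D Ψ CPI Λ₀) :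
    (∃ C Λ : ℝ, 1 ≤ C ∧ 1 ≤ Λ ∧ CSclassical D Ψ C Λ) ↔
      (∃ C Λ : ℝ, 1 ≤ C ∧ 1 ≤ Λ ∧ CSp D C Λ) := by
  constructor
  · -- CSclassical → CSp
    rintro ⟨C, Λ', hC, hΛ', hcs⟩
    obtain ⟨K, hKfin, hK⟩ := PI_double (D := D) hp hdoub hΨ hPI hΛ₀
    set Ctot : ℝ≥0∞ := ENNReal.ofReal C * (1 + K) with hCtot
    have hCtotfin : Ctot ≠ ⊤ := ENNReal.mul_ne_top ENNReal.ofReal_ne_top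
      (ENNReal.add_ne_top.2 ⟨ENNReal.one_ne_top, hKfin⟩)
    refine ⟨max 1 Ctot.toReal, max Λ' (2 * Λ₀), le_max_left _ _,
      hΛ'.trans (le_max_left _ _), ?_⟩
    intro x r hr
    obtain ⟨φ, hφF, hφ1, hφ0, hineq⟩ := hcs x r hr
    refine ⟨φ, hφF, hφ1, hφ0, ?_⟩
    intro f hf g hgf hqc
    set a := avgSet μ (ball x r) f with ha
    set R := max (2 * r) (Λ' * r) with hR
    have hRpos : 0 < R := lt_of_lt_of_le (by linarith) (le_max_left _ _)
    obtain ⟨ψ, hψF, hψc, hψ1, hψ0, hψΓ⟩ := hcap x R hRpos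
    have hψmem : (-a) • ψ ∈ D.F := D.smul_mem (-a) ψ hψF
    set h := f + (-a) • ψ with hh
    have hhF : h ∈ D.F := D.add_mem f hf _ hψmem
    have hghae : (fun y => g y + (-a) * ψ y) =ᵐ[μ] h := by
      filter_upwards [hgf] with y hy
      simp only [hh, Pi.add_apply, Pi.smul_apply, smul_eq_mul, hy]
    have hghqc : D.QuasiCont (fun y => g y + (-a) * ψ y) := by
      intro ε hε
      obtain ⟨O, hO1, hO2, hO3⟩ := hqc ε hε
      exact ⟨O, hO1, hO2, hO3.add (Continuous.continuousOn (continuous_const.mul hψc))⟩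
    have key := hineq h hhF (fun y => g y + (-a) * ψ y) hghae hghqc
    have hsub2R : ball x (2 * r) ⊆ ball x R := ball_subset_ball (le_max_left _ _)
    have hL : ∫⁻ y in ball x (2 * r), ENNReal.ofReal (|g y - a| ^ p) ∂(D.Γ φ) =
        ∫⁻ y in ball x (2 * r), ENNReal.ofReal (|g y + (-a) * ψ y| ^ p) ∂(D.Γ φ) := by
      refine setLIntegral_congr_fun measurableSet_ball (
        fun y hy => ?_)
      rw [hψ1 y (hsub2R hy), show g y - a = g y + (-a) * 1 by ring]
    have hΓh : D.Γ h (ball x (Λ' * r)) ≤ D.Γ f (ball x (max Λ' (2 * Λ₀) * r)) := by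
      have h1 : D.Γ h (ball x (Λ' * r)) ≤ D.Γ f (ball x (Λ' * r)) := by
        refine energy_add_le_of_const D hp hf hψmem isOpen_ball (c := -a) ?_
        filter_upwards [ae_restrict_mem measurableSet_ball] with y hy
        have h2 : ψ y = 1 := hψ1 y (ball_subset_ball (le_max_right _ _) hy)
        simp [Pi.smul_apply, smul_eq_mul, h2]
      refine h1.trans (measure_mono (ball_subset_ball ?_))
      exact mul_le_mul_of_nonneg_right (le_max_left _ _) hr.le
    have hR2 : ∫⁻ y in ball x (2 * r), ENNReal.ofReal (|h y| ^ p) ∂μ =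
        ∫⁻ y in ball x (2 * r), ENNReal.ofReal (|f y - a| ^ p) ∂μ := by
      refine setLIntegral_congr_fun measurableSet_ball (
        fun y hy => ?_)
      have h2 : ψ y = 1 := hψ1 y (hsub2R hy)
      rw [hh]
      simp only [Pi.add_apply, Pi.smul_apply, smul_eq_mul, h2]
      rw [show f y + (-a) * 1 = f y - a by ring]
    have he0 : ENNReal.ofReal (Ψ x r) ≠ 0 := (ENNReal.ofReal_pos.2 (hΨ.2.1 x r hr)).ne'
    have hKx := hK x r hr f hf
    have hmono : D.Γ f (ball x (2 * Λ₀ * r)) ≤ D.Γ f (ball x (max Λ' (2 * Λ₀) * r)) :=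
      measure_mono (ball_subset_ball (mul_le_mul_of_nonneg_right (le_max_right _ _) hr.le))
    calc ∫⁻ y in ball x (2 * r), ENNReal.ofReal (|g y - a| ^ p) ∂(D.Γ φ)
        ≤ ENNReal.ofReal C * D.Γ h (ball x (Λ' * r))
            + (ENNReal.ofReal C / ENNReal.ofReal (Ψ x r))
              * ∫⁻ y in ball x (2 * r), ENNReal.ofReal (|h y| ^ p) ∂μ := hL.trans_le key
      _ ≤ ENNReal.ofReal C * D.Γ f (ball x (max Λ' (2 * Λ₀) * r))
            + (ENNReal.ofReal C / ENNReal.ofReal (Ψ x r))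
              * (K * (ENNReal.ofReal (Ψ x r) * D.Γ f (ball x (max Λ' (2 * Λ₀) * r)))) := by
          refine add_le_add (mul_le_mul_right hΓh _) (mul_le_mul_right ?_ _)
          exact (hR2.trans_le hKx).trans (mul_le_mul_right (mul_le_mul_right hmono _) _)
      _ = Ctot * D.Γ f (ball x (max Λ' (2 * Λ₀) * r)) := by
          have hstep : (ENNReal.ofReal C / ENNReal.ofReal (Ψ x r))
              * (K * (ENNReal.ofReal (Ψ x r) * D.Γ f (ball x (max Λ' (2 * Λ₀) * r))))
              = ENNReal.ofReal C * K * D.Γ f (ball x (max Λ' (2 * Λ₀) * r)) := by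
            rw [ENNReal.div_eq_inv_mul]
            calc (ENNReal.ofReal (Ψ x r))⁻¹ * ENNReal.ofReal C
                  * (K * (ENNReal.ofReal (Ψ x r) * D.Γ f (ball x (max Λ' (2 * Λ₀) * r))))
                = ((ENNReal.ofReal (Ψ x r))⁻¹ * ENNReal.ofReal (Ψ x r))
                  * (ENNReal.ofReal C * K * D.Γ f (ball x (max Λ' (2 * Λ₀) * r))) := by ring
              _ = ENNReal.ofReal C * K * D.Γ f (ball x (max Λ' (2 * Λ₀) * r)) := by
                  rw [ENNReal.inv_mul_cancel he0 ENNReal.ofReal_ne_top, one_mul]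
          rw [hstep, hCtot]
          ring
      _ ≤ ENNReal.ofReal (max 1 Ctot.toReal) * D.Γ f (ball x (max Λ' (2 * Λ₀) * r)) := by
          refine mul_le_mul_left ?_ _
          calc Ctot = ENNReal.ofReal Ctot.toReal := (ENNReal.ofReal_toReal hCtotfin).symm
            _ ≤ ENNReal.ofReal (max 1 Ctot.toReal) :=
              ENNReal.ofReal_le_ofReal (le_max_right _ _)
  · -- CSp → CSclassical
    rintro ⟨C, Λ, hC, hΛ, hcs⟩
    by_cases hX : Nonempty X
    swap
    · exact ⟨1, 1, le_rfl, le_rfl, fun x _ _ => absurd ⟨x⟩ hX⟩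
    obtain ⟨x0⟩ := hX
    have hCD : 0 < C_D := by
      have h1 := hdoub.1 x0 (1/2) (by norm_num)
      rw [show 2 * (1/2 : ℝ) = 1 by norm_num] at h1
      have h2 := (hdoub.2 x0 1 one_pos).1
      by_contra hneg
      push_neg at hneg
      rw [ENNReal.ofReal_eq_zero.2 hneg, zero_mul, nonpos_iff_eq_zero] at h1
      exact h2.ne' h1
    set m0 := C_D⁻¹ with hm0
    have hm0pos : 0 < m0 := inv_pos.2 hCD
    set e2 : ℝ≥0∞ := 2 ^ (p - 1) with he2
    have he2T : e2 ≠ ⊤ := ENNReal.rpow_ne_top_of_nonneg (by linarith) (by norm_num)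
    set cpi : ℝ≥0∞ := ENNReal.ofReal |CPI| with hcpi
    set c2 : ℝ≥0∞ := ENNReal.ofReal (|C_Ψ| * 2 ^ βp) with hc2
    set Kφ : ℝ≥0∞ := (ENNReal.ofReal (m0 ^ p))⁻¹
      * (ENNReal.ofReal C * ENNReal.ofReal Ccap * c2) with hKφ
    have hKφfin : Kφ ≠ ⊤ := by
      refine ENNReal.mul_ne_top ?_ (ENNReal.mul_ne_top (ENNReal.mul_ne_top
        ENNReal.ofReal_ne_top ENNReal.ofReal_ne_top) ENNReal.ofReal_ne_top)
      exact ENNReal.inv_ne_top.2 (ENNReal.ofReal_pos.2 (Real.rpow_pos_of_pos hm0pos p)).ne'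
    set K1 : ℝ≥0∞ := e2 * ENNReal.ofReal C + e2 * (e2 * Kφ) * cpi with hK1
    set K2 : ℝ≥0∞ := e2 * (e2 * Kφ) with hK2
    have hK2fin : K2 ≠ ⊤ := ENNReal.mul_ne_top he2T (ENNReal.mul_ne_top he2T hKφfin)
    have hK1fin : K1 ≠ ⊤ := ENNReal.add_ne_top.2
      ⟨ENNReal.mul_ne_top he2T ENNReal.ofReal_ne_top,
        ENNReal.mul_ne_top hK2fin ENNReal.ofReal_ne_top⟩
    refine ⟨max 1 (max K1.toReal K2.toReal), max Λ Λ₀, le_max_left _ _,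
      hΛ.trans (le_max_left _ _), ?_⟩
    intro x r hr
    obtain ⟨φ, hφF, hφ1, hφ0, hineq⟩ := hcs x r hr
    refine ⟨φ, hφF, hφ1, hφ0, ?_⟩
    have hΨpos : 0 < Ψ x r := hΨ.2.1 x r hr
    set E : ℝ≥0∞ := ENNReal.ofReal (Ψ x r) with hE
    have hE0 : E ≠ 0 := (ENNReal.ofReal_pos.2 hΨpos).ne'
    have hET : E ≠ ⊤ := ENNReal.ofReal_ne_top
    have hφB : D.Γ φ (ball x r) = 0 := by
      refine D.locality φ hφF _ isOpen_ball 1 ?_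
      filter_upwards [ae_restrict_of_ae hφ1, ae_restrict_mem measurableSet_ball] with y h1 h2
      exact h1 h2
    have hΓφ : D.Γ φ (ball x (2 * r)) ≤ Kφ * (μ (ball x r) * E⁻¹) := by
      rcases scale_two hΨ x (half_pos hr) with hsc | huniv
      · rw [show 2 * (r / 2) = r by ring] at hsc
        obtain ⟨ψh, hψhF, hψhc, hψh0le, hψhle1, hψh1, hψh0, hψhΓ⟩ :=
          cutoff_trunc D hcap x (half_pos hr)
        rw [show 2 * (r / 2) = r by ring] at hψh0
        set a0 := avgSet μ (ball x r) ψh with ha0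
        have hμB := hdoub.2 x r hr
        have hμBh := hdoub.2 x (r / 2) (half_pos hr)
        have hμBpos : 0 < (μ (ball x r)).toReal := ENNReal.toReal_pos hμB.1.ne' hμB.2.ne
        have hint : (μ (ball x (r / 2))).toReal ≤ ∫ y in ball x r, ψh y ∂μ := by
          have hsub : ball x (r / 2) ⊆ ball x r := ball_subset_ball (by linarith)
          have hind : IntegrableOn ((ball x (r / 2)).indicator fun _ => (1:ℝ))
              (ball x r) μ := by
            refine (MeasureTheory.IntegrableOn.integrable_indicator ?_
              measurableSet_ball).integrableOn
            exact integrableOn_const hμBh.2.ne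
          have hψint : IntegrableOn ψh (ball x r) μ :=
            Measure.integrableOn_of_bounded hμB.2.ne hψhc.aestronglyMeasurable
              (Filter.Eventually.of_forall fun y => by
                rw [Real.norm_eq_abs, abs_of_nonneg (hψh0le y)]; exact hψhle1 y)
          have hmono := setIntegral_mono_on hind hψint measurableSet_ball (fun y _ => by
            by_cases hyh : y ∈ ball x (r / 2)
            · rw [Set.indicator_of_mem hyh, hψh1 y hyh]
            · rw [Set.indicator_of_notMem hyh]; exact hψh0le y)
          refine le_trans (le_of_eq ?_) hmono
          rw [setIntegral_indicator measurableSet_ball,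
            Set.inter_eq_self_of_subset_right hsub, setIntegral_const, smul_eq_mul, mul_one, measureReal_def]
        have hdB : (μ (ball x r)).toReal ≤ C_D * (μ (ball x (r / 2))).toReal := by
          have h1 := hdoub.1 x (r / 2) (half_pos hr)
          rw [show 2 * (r / 2) = r by ring] at h1
          have h2 := (ENNReal.toReal_le_toReal hμB.2.ne
            (ENNReal.mul_ne_top ENNReal.ofReal_ne_top hμBh.2.ne)).2 h1
          rwa [ENNReal.toReal_mul, ENNReal.toReal_ofReal hCD.le] at h2
        have ha0m : m0 ≤ a0 := by
          have h1 : m0 * (μ (ball x r)).toReal ≤ (μ (ball x (r / 2))).toReal := by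
            rw [hm0]
            nlinarith [inv_pos.2 hCD, mul_inv_cancel₀ (ne_of_gt hCD)]
          have h2 : m0 ≤ (μ (ball x r)).toReal⁻¹ * (μ (ball x (r / 2))).toReal := by
            rw [inv_mul_eq_div, le_div_iff₀ hμBpos]
            exact h1
          refine h2.trans ?_
          rw [ha0]
          unfold avgSet
          exact mul_le_mul_of_nonneg_left hint (inv_nonneg.2 ENNReal.toReal_nonneg)
        have ha0pos : 0 < a0 := lt_of_lt_of_le hm0pos ha0m
        have happ := hineq ψh hψhF ψh Filter.EventuallyEq.rfl
          (quasiCont_of_continuous D hp hψhF hψhc)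
        have hlow : ENNReal.ofReal (a0 ^ p) * D.Γ φ (ball x (2 * r)) ≤
            ENNReal.ofReal C * D.Γ ψh (ball x (Λ * r)) := by
          have hsub : D.Γ φ (ball x (2 * r)) ≤ D.Γ φ (ball x (2 * r) \ ball x r) := by
            calc D.Γ φ (ball x (2 * r))
                ≤ D.Γ φ (ball x r ∪ (ball x (2 * r) \ ball x r)) :=
                  measure_mono (fun y hy => by
                    by_cases hyb : y ∈ ball x r
                    exacts [Or.inl hyb, Or.inr ⟨hy, hyb⟩])
              _ ≤ D.Γ φ (ball x r) + D.Γ φ (ball x (2 * r) \ ball x r) :=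
                  measure_union_le _ _
              _ = D.Γ φ (ball x (2 * r) \ ball x r) := by rw [hφB, zero_add]
          calc ENNReal.ofReal (a0 ^ p) * D.Γ φ (ball x (2 * r))
              ≤ ENNReal.ofReal (a0 ^ p) * D.Γ φ (ball x (2 * r) \ ball x r) :=
                mul_le_mul_right hsub _
            _ = ∫⁻ _ in ball x (2 * r) \ ball x r, ENNReal.ofReal (a0 ^ p) ∂(D.Γ φ) := by
                rw [setLIntegral_const, mul_comm]
            _ = ∫⁻ y in ball x (2 * r) \ ball x r,
                  ENNReal.ofReal (|ψh y - a0| ^ p) ∂(D.Γ φ) := by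
                refine setLIntegral_congr_fun (measurableSet_ball.diff measurableSet_ball)
                  (fun y hy => ?_)
                rw [hψh0 y hy.2, zero_sub, abs_neg, abs_of_pos ha0pos]
            _ ≤ ∫⁻ y in ball x (2 * r), ENNReal.ofReal (|ψh y - a0| ^ p) ∂(D.Γ φ) :=
                lintegral_mono_set Set.diff_subset
            _ ≤ ENNReal.ofReal C * D.Γ ψh (ball x (Λ * r)) := happ
        have hΓψh : D.Γ ψh (ball x (Λ * r)) ≤
            ENNReal.ofReal Ccap * μ (ball x (r / 2)) / ENNReal.ofReal (Ψ x (r / 2)) :=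
          (measure_mono (Set.subset_univ _)).trans hψhΓ
        have ha0p : ENNReal.ofReal (m0 ^ p) ≤ ENNReal.ofReal (a0 ^ p) :=
          ENNReal.ofReal_le_ofReal (Real.rpow_le_rpow hm0pos.le ha0m (by linarith))
        have ha0ne : ENNReal.ofReal (a0 ^ p) ≠ 0 :=
          (ENNReal.ofReal_pos.2 (Real.rpow_pos_of_pos ha0pos p)).ne'
        have hstep : D.Γ φ (ball x (2 * r)) ≤ (ENNReal.ofReal (m0 ^ p))⁻¹
            * (ENNReal.ofReal C * (ENNReal.ofReal Ccap * μ (ball x (r / 2))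
                / ENNReal.ofReal (Ψ x (r / 2)))) := by
          have h3 : D.Γ φ (ball x (2 * r)) = (ENNReal.ofReal (a0 ^ p))⁻¹
              * (ENNReal.ofReal (a0 ^ p) * D.Γ φ (ball x (2 * r))) := by
            rw [← mul_assoc, ENNReal.inv_mul_cancel ha0ne ENNReal.ofReal_ne_top, one_mul]
          rw [h3]
          refine mul_le_mul' (ENNReal.inv_le_inv.2 ha0p) (hlow.trans ?_)
          exact mul_le_mul_right hΓψh _
        refine hstep.trans ?_
        set Eh : ℝ≥0∞ := ENNReal.ofReal (Ψ x (r / 2)) with hEh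
        have hEh0 : Eh ≠ 0 := (ENNReal.ofReal_pos.2 (hΨ.2.1 x (r / 2) (half_pos hr))).ne'
        have hEhT : Eh ≠ ⊤ := ENNReal.ofReal_ne_top
        have hEle : E ≤ c2 * Eh := by
          rw [hE, hEh, hc2]
          refine (ENNReal.ofReal_le_ofReal hsc).trans_eq (ENNReal.ofReal_mul (by positivity))
        have hinv : Eh⁻¹ ≤ c2 * E⁻¹ := by
          calc Eh⁻¹ = Eh⁻¹ * (E * E⁻¹) := by
                rw [ENNReal.mul_inv_cancel hE0 hET, mul_one]
            _ ≤ Eh⁻¹ * ((c2 * Eh) * E⁻¹) := by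
                refine mul_le_mul_right (mul_le_mul_left hEle _) _
            _ = (Eh⁻¹ * Eh) * (c2 * E⁻¹) := by ring
            _ = c2 * E⁻¹ := by rw [ENNReal.inv_mul_cancel hEh0 hEhT, one_mul]
        calc (ENNReal.ofReal (m0 ^ p))⁻¹ * (ENNReal.ofReal C
              * (ENNReal.ofReal Ccap * μ (ball x (r / 2)) / Eh))
            = (ENNReal.ofReal (m0 ^ p))⁻¹ * (ENNReal.ofReal C
              * (ENNReal.ofReal Ccap * (μ (ball x (r / 2)) * Eh⁻¹))) := by
              rw [ENNReal.div_eq_inv_mul]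
              ring
          _ ≤ (ENNReal.ofReal (m0 ^ p))⁻¹ * (ENNReal.ofReal C
              * (ENNReal.ofReal Ccap * (μ (ball x r) * (c2 * E⁻¹)))) := by
              refine mul_le_mul_right (mul_le_mul_right (mul_le_mul_right ?_ _) _) _
              exact mul_le_mul' (measure_mono (ball_subset_ball (by linarith))) hinv
          _ = Kφ * (μ (ball x r) * E⁻¹) := by
              rw [hKφ]
              ring
      · have hBu : ball x r = (Set.univ : Set X) :=
          Set.eq_univ_of_univ_subset (huniv ▸ ball_subset_ball (by linarith))
        have h2B : ball x (2 * r) = ball x r := by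
          rw [hBu]
          exact Set.eq_univ_of_univ_subset (hBu ▸ ball_subset_ball (by linarith))
        rw [h2B, hφB]
        exact zero_le
    intro f hf g hgf hqc
    set a := avgSet μ (ball x r) f with ha
    have hfm : AEMeasurable f μ := (D.mem_Lp f hf).1.aemeasurable
    have hcs1 := hineq f hf g hgf hqc
    have hA : ENNReal.ofReal (|a| ^ p) * μ (ball x r) ≤
        e2 * (∫⁻ y in ball x (2 * r), ENNReal.ofReal (|f y| ^ p) ∂μ
          + cpi * (E * D.Γ f (ball x (Λ₀ * r)))) := by
      have hpt : ∀ y : X, ENNReal.ofReal (|a| ^ p) ≤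
          e2 * (ENNReal.ofReal (|f y| ^ p) + ENNReal.ofReal (|f y - a| ^ p)) := by
        intro y
        have h := ofReal_abs_add_rpow (le_of_lt hp) (f y) (a - f y)
        rw [(by ring : f y + (a - f y) = a), abs_sub_comm a (f y)] at h
        exact h
      calc ENNReal.ofReal (|a| ^ p) * μ (ball x r)
          = ∫⁻ _ in ball x r, ENNReal.ofReal (|a| ^ p) ∂μ := (setLIntegral_const _ _).symm
        _ ≤ ∫⁻ y in ball x r, e2 * (ENNReal.ofReal (|f y| ^ p)
              + ENNReal.ofReal (|f y - a| ^ p)) ∂μ := lintegral_mono fun y => hpt y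
        _ = e2 * (∫⁻ y in ball x r, ENNReal.ofReal (|f y| ^ p) ∂μ
              + ∫⁻ y in ball x r, ENNReal.ofReal (|f y - a| ^ p) ∂μ) := by
            rw [lintegral_const_mul' _ _ he2T]
            congr 1
            have hm1 : AEMeasurable (fun y => ENNReal.ofReal (|f y| ^ p))
                (μ.restrict (ball x r)) := by
              have hm2 := aemeas_ofReal_abs_rpow (hfm.restrict (s := ball x r))
                (by linarith : (0:ℝ) ≤ p) 0
              simpa [sub_zero] using hm2
            exact lintegral_add_left' hm1 _
        _ ≤ e2 * (∫⁻ y in ball x (2 * r), ENNReal.ofReal (|f y| ^ p) ∂μ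
              + cpi * (E * D.Γ f (ball x (Λ₀ * r)))) := by
            refine mul_le_mul_right (add_le_add (lintegral_mono_set
              (ball_subset_ball (by linarith))) ?_) _
            refine (hPI x r hr f hf).trans ?_
            rw [hE, ← mul_assoc]
            exact mul_le_mul_left (ofReal_mul_le_abs _ _ hΨpos.le) _
    have hterm2 : ENNReal.ofReal (|a| ^ p) * D.Γ φ (ball x (2 * r)) ≤
        (e2 * Kφ) * E⁻¹ * ∫⁻ y in ball x (2 * r), ENNReal.ofReal (|f y| ^ p) ∂μ
          + (e2 * Kφ) * cpi * D.Γ f (ball x (Λ₀ * r)) := by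
      calc ENNReal.ofReal (|a| ^ p) * D.Γ φ (ball x (2 * r))
          ≤ ENNReal.ofReal (|a| ^ p) * (Kφ * (μ (ball x r) * E⁻¹)) :=
            mul_le_mul_right hΓφ _
        _ = (Kφ * E⁻¹) * (ENNReal.ofReal (|a| ^ p) * μ (ball x r)) := by ring
        _ ≤ (Kφ * E⁻¹) * (e2 * (∫⁻ y in ball x (2 * r), ENNReal.ofReal (|f y| ^ p) ∂μ
              + cpi * (E * D.Γ f (ball x (Λ₀ * r))))) := mul_le_mul_right hA _
        _ = (e2 * Kφ) * E⁻¹ * ∫⁻ y in ball x (2 * r), ENNReal.ofReal (|f y| ^ p) ∂μ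
              + (e2 * Kφ) * cpi * ((E⁻¹ * E) * D.Γ f (ball x (Λ₀ * r))) := by ring
        _ = (e2 * Kφ) * E⁻¹ * ∫⁻ y in ball x (2 * r), ENNReal.ofReal (|f y| ^ p) ∂μ
              + (e2 * Kφ) * cpi * D.Γ f (ball x (Λ₀ * r)) := by
            rw [ENNReal.inv_mul_cancel hE0 hET, one_mul]
    have hmono1 : D.Γ f (ball x (Λ * r)) ≤ D.Γ f (ball x (max Λ Λ₀ * r)) :=
      measure_mono (ball_subset_ball (mul_le_mul_of_nonneg_right (le_max_left _ _) hr.le))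
    have hmono2 : D.Γ f (ball x (Λ₀ * r)) ≤ D.Γ f (ball x (max Λ Λ₀ * r)) :=
      measure_mono (ball_subset_ball (mul_le_mul_of_nonneg_right (le_max_right _ _) hr.le))
    have hK1C : K1 ≤ ENNReal.ofReal (max 1 (max K1.toReal K2.toReal)) := by
      calc K1 = ENNReal.ofReal K1.toReal := (ENNReal.ofReal_toReal hK1fin).symm
        _ ≤ ENNReal.ofReal (max 1 (max K1.toReal K2.toReal)) :=
          ENNReal.ofReal_le_ofReal ((le_max_left _ _).trans (le_max_right _ _))
    have hK2C : K2 ≤ ENNReal.ofReal (max 1 (max K1.toReal K2.toReal)) := by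
      calc K2 = ENNReal.ofReal K2.toReal := (ENNReal.ofReal_toReal hK2fin).symm
        _ ≤ ENNReal.ofReal (max 1 (max K1.toReal K2.toReal)) :=
          ENNReal.ofReal_le_ofReal ((le_max_right _ _).trans (le_max_right _ _))
    calc ∫⁻ y in ball x (2 * r), ENNReal.ofReal (|g y| ^ p) ∂(D.Γ φ)
        ≤ ∫⁻ y in ball x (2 * r), e2 * (ENNReal.ofReal (|g y - a| ^ p)
            + ENNReal.ofReal (|a| ^ p)) ∂(D.Γ φ) := by
          refine lintegral_mono fun y => ?_
          have h := ofReal_abs_add_rpow (le_of_lt hp) (g y - a) a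
          rwa [(by ring : g y - a + a = g y)] at h
      _ = e2 * (∫⁻ y in ball x (2 * r), ENNReal.ofReal (|g y - a| ^ p) ∂(D.Γ φ)
            + ENNReal.ofReal (|a| ^ p) * D.Γ φ (ball x (2 * r))) := by
          rw [lintegral_const_mul' _ _ he2T, lintegral_add_right' _ aemeasurable_const,
            setLIntegral_const]
      _ ≤ e2 * (ENNReal.ofReal C * D.Γ f (ball x (Λ * r))
            + ((e2 * Kφ) * E⁻¹ * ∫⁻ y in ball x (2 * r), ENNReal.ofReal (|f y| ^ p) ∂μ
              + (e2 * Kφ) * cpi * D.Γ f (ball x (Λ₀ * r)))) :=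
          mul_le_mul_right (add_le_add hcs1 hterm2) _
      _ ≤ e2 * (ENNReal.ofReal C * D.Γ f (ball x (max Λ Λ₀ * r))
            + ((e2 * Kφ) * E⁻¹ * ∫⁻ y in ball x (2 * r), ENNReal.ofReal (|f y| ^ p) ∂μ
              + (e2 * Kφ) * cpi * D.Γ f (ball x (max Λ Λ₀ * r)))) := by
          refine mul_le_mul_right (add_le_add (mul_le_mul_right hmono1 _)
            (add_le_add_right (mul_le_mul_right hmono2 _) _)) _
      _ = K1 * D.Γ f (ball x (max Λ Λ₀ * r))
            + (K2 * E⁻¹) * ∫⁻ y in ball x (2 * r), ENNReal.ofReal (|f y| ^ p) ∂μ := by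
          rw [hK1, hK2]
          ring
      _ ≤ ENNReal.ofReal (max 1 (max K1.toReal K2.toReal)) * D.Γ f (ball x (max Λ Λ₀ * r))
            + (ENNReal.ofReal (max 1 (max K1.toReal K2.toReal)) / E)
              * ∫⁻ y in ball x (2 * r), ENNReal.ofReal (|f y| ^ p) ∂μ := by
          refine add_le_add (mul_le_mul_left hK1C _) (mul_le_mul_left ?_ _)
          rw [div_eq_mul_inv]
          exact mul_le_mul_left hK2C _
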